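/- Let n > C ≥ 1, and consider the uniform-weight instance w_j = 1/C on {0,1}^n and, for each S ⊆ {1,...,n} with |S| = C+1, the perturbed instance w^S with w^S_j = 1/(C+1) for j ∈ S and 1/C otherwise. A vector x ∈ {0,1}^n satisfies the constraint ∑_j w^S_j x_j ≤ 1 but violates ∑_j w_j x_j ≤ 1 if and only if x is the indicator vector of S. In particular, the feasible set of w^S equals the feasible set of w together with exactly one additional point. -/

import Mathlib

/-- a binary vector is feasible for the perturbed instance w^S but infeasible for
the uniform instance w iff it is the indicator of S; hence the feasible set of w^S is the
feasible set of w plus exactly one additional point. -/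
theorem stmt_3 (n C : ℕ) (hC : 1 ≤ C) (hn : C < n)
    (S : Finset (Fin n)) (hS : S.card = C + 1)
    (w wS : Fin n → ℝ)
    (hw : ∀ j, w j = 1 / (C : ℝ))
    (hwS : ∀ j, wS j = if j ∈ S then 1 / ((C : ℝ) + 1) else 1 / (C : ℝ)) :
    (∀ x : Fin n → ℝ, (∀ j, x j = 0 ∨ x j = 1) →
      (((∑ j, wS j * x j) ≤ 1 ∧ ¬ (∑ j, w j * x j) ≤ 1) ↔
        x = fun j => if j ∈ S then (1 : ℝ) else 0)) ∧
    {x : Fin n → ℝ | (∀ j, x j = 0 ∨ x j = 1) ∧ (∑ j, wS j * x j) ≤ 1} =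
      {x : Fin n → ℝ | (∀ j, x j = 0 ∨ x j = 1) ∧ (∑ j, w j * x j) ≤ 1} ∪
        {fun j => if j ∈ S then (1 : ℝ) else 0} ∧
    (fun j => if j ∈ S then (1 : ℝ) else 0) ∉
      {x : Fin n → ℝ | (∀ j, x j = 0 ∨ x j = 1) ∧ (∑ j, w j * x j) ≤ 1} := by
  have hC0 : (0:ℝ) < C := by exact_mod_cast Nat.lt_of_lt_of_le Nat.zero_lt_one hC
  have hC1 : (0:ℝ) < (C:ℝ) + 1 := by linarith
  -- sum of w times indicator of S
  have hwind : (∑ j, w j * (if j ∈ S then (1:ℝ) else 0)) = ((C:ℝ) + 1) / C := by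
    have : ∀ j, w j * (if j ∈ S then (1:ℝ) else 0) = if j ∈ S then 1 / (C:ℝ) else 0 := by
      intro j; rw [hw]; split <;> simp
    rw [Finset.sum_congr rfl fun j _ => this j, Finset.sum_ite_mem, Finset.univ_inter,
      Finset.sum_const, hS, nsmul_eq_mul]
    push_cast
    field_simp
  have hwSind : (∑ j, wS j * (if j ∈ S then (1:ℝ) else 0)) = 1 := by
    have : ∀ j, wS j * (if j ∈ S then (1:ℝ) else 0) = if j ∈ S then 1 / ((C:ℝ)+1) else 0 := by
      intro j; rw [hwS]; split <;> simp
    rw [Finset.sum_congr rfl fun j _ => this j, Finset.sum_ite_mem, Finset.univ_inter,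
      Finset.sum_const, hS, nsmul_eq_mul]
    push_cast
    field_simp
  have hwind_gt : ¬ (∑ j, w j * (if j ∈ S then (1:ℝ) else 0)) ≤ 1 := by
    rw [hwind, not_le, lt_div_iff₀ hC0]; linarith
  have hindbin : ∀ j, (if j ∈ S then (1:ℝ) else 0) = 0 ∨ (if j ∈ S then (1:ℝ) else 0) = 1 := by
    intro j; split <;> simp
  -- the key equivalence
  have key : ∀ x : Fin n → ℝ, (∀ j, x j = 0 ∨ x j = 1) →
      (((∑ j, wS j * x j) ≤ 1 ∧ ¬ (∑ j, w j * x j) ≤ 1) ↔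
        x = fun j => if j ∈ S then (1 : ℝ) else 0) := by
    intro x hx
    constructor
    · rintro ⟨h1, h2⟩
      set y : Fin n → ℕ := fun j => if x j = 1 then 1 else 0 with hy
      have hxy : ∀ j, x j = (y j : ℝ) := by
        intro j; rcases hx j with h | h <;> simp [hy, h]
      have hy1 : ∀ j, y j ≤ 1 := by
        intro j; simp only [hy]; split <;> simp
      set a := ∑ j ∈ S, y j with ha
      set b := ∑ j ∈ Sᶜ, y j with hb
      have hsplit : ∀ f : Fin n → ℝ, (∑ j, f j) = (∑ j ∈ S, f j) + ∑ j ∈ Sᶜ, f j := by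
        intro f; rw [Finset.sum_add_sum_compl]
      -- compute both sums
      have hwsum : (∑ j, w j * x j) = ((a : ℝ) + b) / C := by
        rw [hsplit]
        have e1 : (∑ j ∈ S, w j * x j) = (a : ℝ) / C := by
          have h : ∀ j ∈ S, w j * x j = (y j : ℝ) * (1/(C:ℝ)) := fun j _ => by
            rw [hw, hxy]; ring
          rw [Finset.sum_congr rfl h, ← Finset.sum_mul, ha, Nat.cast_sum]; ring
        have e2 : (∑ j ∈ Sᶜ, w j * x j) = (b : ℝ) / C := by
          have h : ∀ j ∈ Sᶜ, w j * x j = (y j : ℝ) * (1/(C:ℝ)) := fun j _ => by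
            rw [hw, hxy]; ring
          rw [Finset.sum_congr rfl h, ← Finset.sum_mul, hb, Nat.cast_sum]; ring
        rw [e1, e2]; ring
      have hwSsum : (∑ j, wS j * x j) = (a : ℝ) / ((C:ℝ)+1) + (b : ℝ) / C := by
        rw [hsplit]
        have e1 : (∑ j ∈ S, wS j * x j) = (a : ℝ) / ((C:ℝ)+1) := by
          have h : ∀ j ∈ S, wS j * x j = (y j : ℝ) * (1/((C:ℝ)+1)) := fun j hj => by
            rw [hwS, if_pos hj, hxy]; ring
          rw [Finset.sum_congr rfl h, ← Finset.sum_mul, ha, Nat.cast_sum]; ring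
        have e2 : (∑ j ∈ Sᶜ, wS j * x j) = (b : ℝ) / C := by
          have h : ∀ j ∈ Sᶜ, wS j * x j = (y j : ℝ) * (1/(C:ℝ)) := fun j hj => by
            rw [hwS, if_neg (Finset.mem_compl.mp hj), hxy]; ring
          rw [Finset.sum_congr rfl h, ← Finset.sum_mul, hb, Nat.cast_sum]; ring
        rw [e1, e2]
      rw [hwSsum] at h1
      rw [hwsum, not_le, lt_div_iff₀ hC0, one_mul] at h2
      -- integrality
      have hab : C + 1 ≤ a + b := by
        have : (C:ℝ) < (a:ℝ) + b := h2
        exact_mod_cast Nat.succ_le_of_lt (by exact_mod_cast this)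
      have haC : a ≤ C + 1 := by
        calc a ≤ ∑ j ∈ S, 1 := Finset.sum_le_sum fun j _ => hy1 j
        _ = C + 1 := by rw [Finset.sum_const, smul_eq_mul, mul_one, hS]
      -- clear denominators in h1
      have h1' : (a:ℝ) * C + (b:ℝ) * ((C:ℝ)+1) ≤ ((C:ℝ)+1) * C := by
        rw [div_add_div _ _ (ne_of_gt hC1) (ne_of_gt hC0), div_le_one (by positivity)] at h1
        linarith
      have hbz : b = 0 := by
        have habR : ((C:ℝ)+1) ≤ (a:ℝ) + b := by exact_mod_cast hab
        have hbnn : (0:ℝ) ≤ (b:ℝ) := Nat.cast_nonneg b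
        have : (b:ℝ) ≤ 0 := by nlinarith
        exact_mod_cast le_antisymm (by exact_mod_cast this) (Nat.zero_le b)
      have haz : a = C + 1 := le_antisymm haC (by omega)
      -- conclude pointwise
      have hout : ∀ j ∈ Sᶜ, y j = 0 := by
        intro j hj
        exact (Finset.sum_eq_zero_iff.mp hbz.symm.symm) j hj
      have hin : ∀ j ∈ S, y j = 1 := by
        have hsum : (∑ j ∈ S, y j) = ∑ j ∈ S, 1 := by
          rw [← ha, haz, Finset.sum_const, smul_eq_mul, mul_one, hS]
        intro j hj
        exact ((Finset.sum_eq_sum_iff_of_le fun i _ => hy1 i).mp hsum) j hj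
      funext j
      by_cases hj : j ∈ S
      · simp only [hj, if_true]; rw [hxy j, hin j hj, Nat.cast_one]
      · simp only [hj, if_false]; rw [hxy j, hout j (Finset.mem_compl.mpr hj), Nat.cast_zero]
    · rintro rfl
      exact ⟨le_of_eq hwSind, hwind_gt⟩
  refine ⟨key, ?_, ?_⟩
  · ext x
    simp only [Set.mem_union, Set.mem_setOf_eq, Set.mem_singleton_iff]
    constructor
    · rintro ⟨hb, hfeas⟩
      by_cases hwf : (∑ j, w j * x j) ≤ 1
      · exact Or.inl ⟨hb, hwf⟩
      · exact Or.inr ((key x hb).mp ⟨hfeas, hwf⟩)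
    · rintro (⟨hb, hwf⟩ | rfl)
      · refine ⟨hb, le_trans (Finset.sum_le_sum fun j _ => ?_) hwf⟩
        have hxj : 0 ≤ x j := by rcases hb j with h | h <;> rw [h] <;> norm_num
        apply mul_le_mul_of_nonneg_right _ hxj
        rw [hw, hwS]
        split
        · exact one_div_le_one_div_of_le hC0 (by linarith)
        · exact le_refl _
      · exact ⟨hindbin, le_of_eq hwSind⟩
  · intro h
    exact hwind_gt h.2
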